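/- Let L ∈ ℕ and f: Λ_L → ℂ, with discrete Fourier transform f̂(q) = Σ_{x∈Λ_L} f(x) e^{−2πiq·x} for q ∈ Λ_L* ⊂ (−1/2,1/2]. Define the discrete gradient ∇f(x) := f(x+1) − f(x) and the first-order Taylor remainder 𝓡(f; x, y) := f(x+y) − f(x) − y ∇f(x), where x, y ∈ Λ_L with periodic arithmetic and y is identified with its integer representative. Then for all x, y ∈ Λ_L: |𝓡(f; x, y)| ≤ 4π² y² · L^{−1} Σ_{q∈Λ_L*} q² |f̂(q)|, and also |𝓡(f; x, y)| ≤ 4 |y| · sup_{x'∈Λ_L} |f(x')|. -/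

import Mathlib

open Real Complex

/-- The discrete circle of `L` sites, represented by integers:
`{−(L−1)/2, …, (L−1)/2}` for odd `L` and `{−L/2+1, …, L/2}` for even `L`. -/
noncomputable def Lambda (L : ℕ) : Finset ℤ := Finset.Ioc ((L : ℤ) / 2 - L) ((L : ℤ) / 2)

/-- Periodic reduction `[x]_L`: the representative of `x mod L` lying in `Λ_L`. -/
def wrap (L : ℕ) (x : ℤ) : ℤ :=
  (x - ((L : ℤ) / 2 - L + 1)) % L + ((L : ℤ) / 2 - L + 1)

/-- Discrete Fourier transform `f̂(q) = Σ_{x∈Λ_L} f(x) e^{−2πiq·x}`, `q = p/L`, `p ∈ Λ_L`. -/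
noncomputable def dft (L : ℕ) (f : ℤ → ℂ) (p : ℤ) : ℂ :=
  ∑ x ∈ Lambda L, f x * Complex.exp (-(2 * π * ((p : ℝ) / L) * x) * Complex.I)

/-- The discrete gradient `∇f(x) = f(x+1) − f(x)` (with periodic arithmetic). -/
noncomputable def dGrad (L : ℕ) (f : ℤ → ℂ) (x : ℤ) : ℂ := f (wrap L (x + 1)) - f x

/-- The first-order discrete Taylor remainder `𝓡(f;x,y) = f(x+y) − f(x) − y∇f(x)`. -/
noncomputable def taylorRem (L : ℕ) (f : ℤ → ℂ) (x y : ℤ) : ℂ :=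
  f (wrap L (x + y)) - f x - (y : ℂ) * dGrad L f x

section aux
open intervalIntegral


lemma ebound_nn {θ : ℝ} (hθ : 0 ≤ θ) : ‖Complex.exp (θ * I) - 1‖ ≤ θ := by
  have hI : (I : ℂ) ≠ 0 := I_ne_zero
  have hint : (∫ t in (0:ℝ)..θ, Complex.exp (I * t)) = (Complex.exp (I * θ) - 1) / I := by
    simpa using integral_exp_mul_complex hI (a := 0) (b := θ)
  have heq : Complex.exp (θ * I) - 1 = I * ∫ t in (0:ℝ)..θ, Complex.exp (I * t) := by
    rw [hint, mul_div_assoc', mul_comm I, mul_div_assoc, div_self hI, mul_one, mul_comm]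
  rw [heq, norm_mul, Complex.norm_I, one_mul]
  calc ‖∫ t in (0:ℝ)..θ, Complex.exp (I * t)‖
      ≤ ∫ t in (0:ℝ)..θ, ‖Complex.exp (I * t)‖ := by
        simpa using
          intervalIntegral.norm_integral_le_integral_norm (f := fun t : ℝ => Complex.exp (I * t)) (μ := MeasureTheory.volume) hθ
    _ = θ := by
        have : ∀ t : ℝ, ‖Complex.exp (I * t)‖ = 1 := fun t => by
          rw [mul_comm]; exact Complex.norm_exp_ofReal_mul_I t
        simp [this]

lemma ebound (θ : ℝ) : ‖Complex.exp (θ * I) - 1‖ ≤ |θ| := by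
  rcases le_or_gt 0 θ with h | h
  · rw [_root_.abs_of_nonneg h]; exact ebound_nn h
  · have h' : 0 ≤ -θ := by linarith
    have := ebound_nn h'
    have hc : Complex.exp (θ * I) - 1 = starRingEnd ℂ (Complex.exp ((-θ : ℝ) * I) - 1) := by
      rw [map_sub, ← Complex.exp_conj]; push_cast; simp [mul_comm]
    rw [hc, Complex.norm_conj, abs_of_neg h]
    simpa using this

lemma hbound_nn {θ : ℝ} (hθ : 0 ≤ θ) :
    ‖Complex.exp (θ * I) - 1 - θ * I‖ ≤ θ ^ 2 / 2 := by
  have hI : (I : ℂ) ≠ 0 := I_ne_zero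
  have hint : (∫ t in (0:ℝ)..θ, Complex.exp (I * t)) = (Complex.exp (I * θ) - 1) / I := by
    simpa using integral_exp_mul_complex hI (a := 0) (b := θ)
  have hcont : Continuous fun t : ℝ => Complex.exp (I * t) - 1 := by
    continuity
  have heq : Complex.exp (θ * I) - 1 - θ * I
      = I * ∫ t in (0:ℝ)..θ, (Complex.exp (I * t) - 1) := by
    rw [intervalIntegral.integral_sub ((Continuous.intervalIntegrable (by continuity) 0 θ))
      (intervalIntegrable_const), hint]
    simp only [intervalIntegral.integral_const, smul_eq_mul, sub_zero, mul_one, smul_eq_mul]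
    rw [mul_sub, mul_div_assoc', mul_comm I, mul_div_assoc, div_self hI, mul_one, mul_comm]
    push_cast [Complex.real_smul]; ring
  rw [heq, norm_mul, Complex.norm_I, one_mul]
  calc ‖∫ t in (0:ℝ)..θ, (Complex.exp (I * t) - 1)‖
      ≤ ∫ t in (0:ℝ)..θ, ‖Complex.exp (I * t) - 1‖ := by
        simpa using
          intervalIntegral.norm_integral_le_integral_norm
            (f := fun t : ℝ => Complex.exp (I * t) - 1) (μ := MeasureTheory.volume) hθ
    _ ≤ ∫ t in (0:ℝ)..θ, t := by
        apply intervalIntegral.integral_mono_on hθ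
        · exact (Continuous.intervalIntegrable (by continuity) 0 θ)
        · exact intervalIntegrable_id
        · intro t ht
          have := ebound t
          rw [_root_.abs_of_nonneg ht.1] at this
          rw [mul_comm] at this
          exact this
    _ = θ ^ 2 / 2 := by simp [integral_id]

lemma hbound (θ : ℝ) : ‖Complex.exp (θ * I) - 1 - θ * I‖ ≤ θ ^ 2 / 2 := by
  rcases le_or_gt 0 θ with h | h
  · exact hbound_nn h
  · have h' : 0 ≤ -θ := by linarith
    have := hbound_nn h'
    have hc : Complex.exp (θ * I) - 1 - θ * I
        = starRingEnd ℂ (Complex.exp ((-θ : ℝ) * I) - 1 - (-θ : ℝ) * I) := by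
      simp only [map_sub, ← Complex.exp_conj]; push_cast; simp [mul_comm]
    rw [hc, Complex.norm_conj]
    calc ‖Complex.exp ((-θ:ℝ) * I) - 1 - (-θ:ℝ) * I‖ ≤ (-θ) ^ 2 / 2 := this
      _ = θ ^ 2 / 2 := by ring



lemma wrap_mem (L : ℕ) (hL : 0 < L) (z : ℤ) : wrap L z ∈ Lambda L := by
  have hL' : (0:ℤ) < L := by exact_mod_cast hL
  have h1 := Int.emod_nonneg (z - ((L : ℤ) / 2 - L + 1)) (by exact_mod_cast hL.ne' : (L:ℤ) ≠ 0)
  have h2 := Int.emod_lt_of_pos (z - ((L : ℤ) / 2 - L + 1)) hL'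
  simp only [Lambda, wrap, Finset.mem_Ioc]
  omega

lemma dvd_sub_wrap (L : ℕ) (z : ℤ) : (L : ℤ) ∣ z - wrap L z := by
  unfold wrap
  have := Int.emod_add_mul_ediv (z - ((L : ℤ) / 2 - L + 1)) L
  exact ⟨(z - ((L : ℤ) / 2 - L + 1)) / L, by omega⟩

lemma wrap_eq_self {L : ℕ} (hL : 0 < L) {z : ℤ} (h : z ∈ Lambda L) : wrap L z = z := by
  have hm := wrap_mem L hL z
  have hd := dvd_sub_wrap L z
  simp only [Lambda, Finset.mem_Ioc] at h hm
  obtain ⟨k, hk⟩ := hd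
  have hL' : (0:ℤ) < L := by exact_mod_cast hL
  have hk0 : k = 0 := by
    by_contra h0
    have h1 : (0:ℤ) < |k| := abs_pos.mpr h0
    have h1' : (1:ℤ) ≤ |k| := by omega
    have h2 : (L:ℤ) ≤ |(L:ℤ) * k| := by
      rw [abs_mul, abs_of_pos hL']
      nlinarith
    rw [le_abs] at h2
    omega
  subst hk0
  omega

-- kernel exp: e(p, x) := exp(2π(p/L)x * I)
noncomputable def ker (L : ℕ) (p x : ℤ) : ℂ :=
  Complex.exp ((2 * π * ((p : ℝ) / L) * x : ℝ) * I)

lemma ker_wrap (L : ℕ) (hL : 0 < L) (p z : ℤ) : ker L p (wrap L z) = ker L p z := by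
  obtain ⟨k, hk⟩ := dvd_sub_wrap L z
  have hz : (z : ℝ) = (wrap L z : ℝ) + (L : ℝ) * k := by
    have : z = wrap L z + L * k := by omega
    exact_mod_cast congrArg (Int.cast : ℤ → ℝ) this
  have hLne : (L : ℝ) ≠ 0 := by exact_mod_cast hL.ne'
  unfold ker
  rw [hz]
  push_cast
  rw [show (2 * π * (↑p / ↑L) * (↑(wrap L z) + ↑L * ↑k) : ℂ) * I
      = (2 * π * (↑p / ↑L) * ↑(wrap L z)) * I + (↑(p * k) : ℤ) * (2 * π * I) by
    have hLC : (L:ℂ) ≠ 0 := by exact_mod_cast hL.ne'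
    push_cast; field_simp]
  rw [Complex.exp_add, Complex.exp_int_mul_two_pi_mul_I, mul_one]


lemma Lambda_eq_of_dvd {L : ℕ} (hL : 0 < L) {a b : ℤ} (ha : a ∈ Lambda L)
    (hb : b ∈ Lambda L) (hd : (L:ℤ) ∣ a - b) : a = b := by
  simp only [Lambda, Finset.mem_Ioc] at ha hb
  obtain ⟨k, hk⟩ := hd
  have hL' : (0:ℤ) < L := by exact_mod_cast hL
  have hk0 : k = 0 := by
    by_contra h0
    have h1 : (0:ℤ) < |k| := abs_pos.mpr h0
    have h1' : (1:ℤ) ≤ |k| := by omega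
    have h2 : (L:ℤ) ≤ |(L:ℤ) * k| := by
      rw [abs_mul, abs_of_pos hL']
      nlinarith
    rw [le_abs] at h2
    omega
  subst hk0
  omega

lemma Lambda_card (L : ℕ) : (Lambda L).card = L := by
  simp [Lambda, Int.card_Ioc]

lemma ker_pow (L : ℕ) (p k : ℤ) :
    ker L p k = Complex.exp ((2 * π * ((k : ℝ) / L) : ℝ) * I) ^ p := by
  rw [← Complex.exp_int_mul]
  unfold ker
  congr 1
  push_cast
  ring

lemma orth (L : ℕ) (hL : 0 < L) (k : ℤ) :
    ∑ p ∈ Lambda L, ker L p k = if (L:ℤ) ∣ k then (L : ℂ) else 0 := by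
  have hLR : (L : ℝ) ≠ 0 := by exact_mod_cast hL.ne'
  by_cases hd : (L:ℤ) ∣ k
  · obtain ⟨m, hm⟩ := hd
    have hone : ∀ p ∈ Lambda L, ker L p k = 1 := by
      intro p _
      unfold ker
      have hLC : (L:ℂ) ≠ 0 := by exact_mod_cast hL.ne'
      rw [show ((2 * π * ((p:ℝ)/L) * k : ℝ) : ℂ) * I = ((p * m : ℤ) : ℂ) * (2 * π * I) by
        rw [hm]; push_cast; field_simp]
      exact Complex.exp_int_mul_two_pi_mul_I _
    rw [Finset.sum_congr rfl hone, Finset.sum_const, Lambda_card, if_pos ⟨m, hm⟩]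
    simp
  · set ζ : ℂ := Complex.exp ((2 * π * ((k : ℝ) / L) : ℝ) * I) with hζ
    have hζne : ζ ≠ 1 := by
      intro h
      rw [hζ, Complex.exp_eq_one_iff] at h
      obtain ⟨n, hn⟩ := h
      have hI : ((2 * π * ((k : ℝ) / L) : ℝ) : ℂ) = n * (2 * π) := by
        exact mul_right_cancel₀ I_ne_zero (by rw [hn]; ring)
      have hR : (2 * π * ((k : ℝ) / L)) = (n : ℝ) * (2 * π) := by exact_mod_cast hI
      have hk : (k : ℝ) = n * L := by
        field_simp at hR
        nlinarith [Real.pi_pos, hR]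
      have : k = n * L := by exact_mod_cast hk
      exact hd ⟨n, by rw [this, mul_comm]⟩
    have hζL : ζ ^ (L : ℕ) = 1 := by
      have hLC : (L:ℂ) ≠ 0 := by exact_mod_cast hL.ne'
      rw [hζ, ← Complex.exp_nat_mul]
      rw [show ((L : ℕ) : ℂ) * (((2 * π * ((k : ℝ) / L) : ℝ) : ℂ) * I) = (k : ℂ) * (2 * π * I) by
        push_cast; field_simp]
      exact Complex.exp_int_mul_two_pi_mul_I k
    have hmap : Lambda L = (Finset.range L).map
        ⟨fun i : ℕ => ((L : ℤ) / 2 - L + 1) + (i : ℤ), show Function.Injective (fun i : ℕ => ((L : ℤ) / 2 - L + 1) + (i : ℤ)) from fun a b h => by simp at h; omega⟩ := by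
      ext p
      simp only [Lambda, Finset.mem_Ioc, Finset.mem_map, Finset.mem_range,
        Function.Embedding.coeFn_mk]
      constructor
      · intro h
        exact ⟨(p - ((L : ℤ) / 2 - L + 1)).toNat, by omega, by omega⟩
      · rintro ⟨i, hi, rfl⟩
        omega
    have hζ0 : ζ ≠ 0 := Complex.exp_ne_zero _
    calc ∑ p ∈ Lambda L, ker L p k
        = ∑ i ∈ Finset.range L, ζ ^ (((L : ℤ) / 2 - L + 1) + (i : ℤ)) := by
          rw [hmap, Finset.sum_map]
          exact Finset.sum_congr rfl fun i _ => by
            simp only [Function.Embedding.coeFn_mk]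
            rw [ker_pow, hζ]
      _ = ζ ^ ((L : ℤ) / 2 - L + 1) * ∑ i ∈ Finset.range L, ζ ^ (i : ℕ) := by
          rw [Finset.mul_sum]
          exact Finset.sum_congr rfl fun i _ => by
            rw [zpow_add₀ hζ0, zpow_natCast]
      _ = 0 := by
          rw [geom_sum_eq hζne, hζL]
          simp
      _ = if (L:ℤ) ∣ k then (L : ℂ) else 0 := by rw [if_neg hd]



lemma ker_add (L : ℕ) (p a b : ℤ) : ker L p (a + b) = ker L p a * ker L p b := by
  unfold ker
  rw [← Complex.exp_add]
  congr 1
  push_cast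
  ring

lemma inversion (L : ℕ) (hL : 0 < L) (f : ℤ → ℂ) {x : ℤ} (hx : x ∈ Lambda L) :
    f x = (L : ℂ)⁻¹ * ∑ p ∈ Lambda L, dft L f p * ker L p x := by
  have hLC : (L : ℂ) ≠ 0 := by exact_mod_cast hL.ne'
  have key : ∑ p ∈ Lambda L, dft L f p * ker L p x
      = ∑ x' ∈ Lambda L, f x' * ∑ p ∈ Lambda L, ker L p (x - x') := by
    unfold dft
    simp only [Finset.sum_mul, Finset.mul_sum]
    rw [Finset.sum_comm]
    refine Finset.sum_congr rfl fun x' _ => Finset.sum_congr rfl fun p _ => ?_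
    unfold ker
    rw [mul_assoc, ← Complex.exp_add]
    congr 2
    push_cast
    ring
  rw [key, Finset.sum_eq_single x]
  · rw [sub_self, orth L hL 0, if_pos (dvd_zero _)]
    field_simp
  · intro x' hx' hne
    rw [orth L hL (x - x'), if_neg, mul_zero]
    intro hdvd
    exact hne ((Lambda_eq_of_dvd hL hx hx' hdvd).symm)
  · intro h; exact absurd hx h



lemma remEq (L : ℕ) (hL : 0 < L) (f : ℤ → ℂ) {x y : ℤ} (hx : x ∈ Lambda L) :
    taylorRem L f x y = (L : ℂ)⁻¹ * ∑ p ∈ Lambda L,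
      dft L f p * ker L p x * (ker L p y - 1 - (y : ℂ) * (ker L p 1 - 1)) := by
  have h1 := inversion L hL f hx
  have h2 := inversion L hL f (wrap_mem L hL (x + y))
  have h3 := inversion L hL f (wrap_mem L hL (x + 1))
  unfold taylorRem dGrad
  rw [h1, h2, h3]
  have e2 : ∀ p ∈ Lambda L, dft L f p * ker L p (wrap L (x + y))
      = dft L f p * ker L p x * ker L p y := fun p _ => by
    rw [ker_wrap L hL p (x + y), ker_add, mul_assoc]
  have e3 : ∀ p ∈ Lambda L, dft L f p * ker L p (wrap L (x + 1))
      = dft L f p * ker L p x * ker L p 1 := fun p _ => by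
    rw [ker_wrap L hL p (x + 1), ker_add, mul_assoc]
  rw [Finset.sum_congr rfl e2, Finset.sum_congr rfl e3]
  have expand : ∀ p ∈ Lambda L,
      dft L f p * ker L p x * (ker L p y - 1 - (y : ℂ) * (ker L p 1 - 1))
      = dft L f p * ker L p x * ker L p y - dft L f p * ker L p x
        - (y : ℂ) * (dft L f p * ker L p x * ker L p 1 - dft L f p * ker L p x) :=
    fun p _ => by ring
  rw [Finset.sum_congr rfl expand]
  simp only [Finset.sum_sub_distrib, ← Finset.mul_sum]
  ring

lemma hy_sq {y : ℤ} : |(y : ℝ)| ≤ (y : ℝ) ^ 2 := by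
  rcases eq_or_ne y 0 with rfl | h0
  · simp
  · have h1 : (1 : ℤ) ≤ |y| := Int.one_le_abs (by omega)
    have h1' : (1 : ℝ) ≤ |(y : ℝ)| := by
      rw [← Int.cast_abs]; exact_mod_cast h1
    nlinarith [_root_.sq_abs ((y : ℝ)), abs_nonneg ((y : ℝ))]

lemma gbound (θ : ℝ) (y : ℤ) :
    ‖Complex.exp ((θ * (y : ℝ) : ℝ) * I) - 1
        - (y : ℂ) * (Complex.exp ((θ : ℝ) * I) - 1)‖ ≤ θ ^ 2 * (y : ℝ) ^ 2 := by
  have hid : Complex.exp ((θ * (y : ℝ) : ℝ) * I) - 1 - (y : ℂ) * (Complex.exp ((θ : ℝ) * I) - 1)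
      = (Complex.exp ((θ * (y : ℝ) : ℝ) * I) - 1 - ((θ * (y : ℝ) : ℝ) : ℂ) * I)
        - (y : ℂ) * (Complex.exp ((θ : ℝ) * I) - 1 - ((θ : ℝ) : ℂ) * I) := by
    push_cast; ring
  rw [hid]
  calc ‖_‖
      ≤ ‖Complex.exp ((θ * (y : ℝ) : ℝ) * I) - 1 - ((θ * (y : ℝ) : ℝ) : ℂ) * I‖
        + ‖(y : ℂ) * (Complex.exp ((θ : ℝ) * I) - 1 - ((θ : ℝ) : ℂ) * I)‖ :=
        norm_sub_le _ _
    _ ≤ (θ * (y : ℝ)) ^ 2 / 2 + |(y : ℝ)| * (θ ^ 2 / 2) := by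
        rw [norm_mul]
        gcongr
        · exact hbound _
        · simp [Complex.norm_intCast]
        · exact hbound _
    _ ≤ θ ^ 2 * (y : ℝ) ^ 2 := by
        have := hy_sq (y := y)
        nlinarith [sq_nonneg θ, sq_nonneg ((y:ℝ)), abs_nonneg ((y:ℝ))]

end aux

/-- Bounds on the first-order discrete Taylor remainder:
`|𝓡(f;x,y)| ≤ 4π² y² L⁻¹ Σ_{q∈Λ_L*} q² |f̂(q)|` and `|𝓡(f;x,y)| ≤ 4|y| sup_{x'} |f(x')|`. -/

theorem discrete_taylor_remainder_bounds (L : ℕ) (hL : 0 < L) (f : ℤ → ℂ) :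
    ∀ x ∈ Lambda L, ∀ y ∈ Lambda L,
      ‖taylorRem L f x y‖
          ≤ 4 * π ^ 2 * (y : ℝ) ^ 2 *
            ((L : ℝ)⁻¹ * ∑ p ∈ Lambda L, ((p : ℝ) / L) ^ 2 * ‖dft L f p‖) ∧
      ‖taylorRem L f x y‖
          ≤ 4 * |(y : ℝ)| *
            (Lambda L).sup' (by unfold Lambda; exact Finset.nonempty_Ioc.mpr (by omega))
              (fun x' => ‖f x'‖) := by
  intro x hx y hy
  constructor
  · -- Fourier bound
    have hLR : (0 : ℝ) ≤ (L : ℝ)⁻¹ := by positivity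
    rw [remEq L hL f hx (y := y)]
    rw [norm_mul, norm_inv, Complex.norm_natCast]
    have hterm : ∀ p ∈ Lambda L,
        ‖dft L f p * ker L p x * (ker L p y - 1 - (y : ℂ) * (ker L p 1 - 1))‖
        ≤ 4 * π ^ 2 * (y : ℝ) ^ 2 * (((p : ℝ) / L) ^ 2 * ‖dft L f p‖) := by
      intro p _
      rw [norm_mul, norm_mul]
      have hker1 : ‖ker L p x‖ = 1 := by
        unfold ker; exact Complex.norm_exp_ofReal_mul_I _
      rw [hker1, mul_one]
      have hky : ker L p y = Complex.exp (((2 * π * ((p : ℝ) / L)) * (y : ℝ) : ℝ) * I) := by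
        unfold ker; norm_num
      have hk1 : ker L p 1 = Complex.exp (((2 * π * ((p : ℝ) / L)) : ℝ) * I) := by
        unfold ker; norm_num
      have hg := gbound (2 * π * ((p : ℝ) / L)) y
      rw [← hky, ← hk1] at hg
      calc ‖dft L f p‖ * ‖ker L p y - 1 - (y : ℂ) * (ker L p 1 - 1)‖
          ≤ ‖dft L f p‖ * ((2 * π * ((p : ℝ) / L)) ^ 2 * (y : ℝ) ^ 2) :=
            mul_le_mul_of_nonneg_left hg (norm_nonneg _)
        _ = 4 * π ^ 2 * (y : ℝ) ^ 2 * (((p : ℝ) / L) ^ 2 * ‖dft L f p‖) := by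
            ring
    calc (L : ℝ)⁻¹ * ‖∑ p ∈ Lambda L,
            dft L f p * ker L p x * (ker L p y - 1 - (y : ℂ) * (ker L p 1 - 1))‖
        ≤ (L : ℝ)⁻¹ * ∑ p ∈ Lambda L,
            ‖dft L f p * ker L p x * (ker L p y - 1 - (y : ℂ) * (ker L p 1 - 1))‖ := by
          gcongr
          exact norm_sum_le _ _
      _ ≤ (L : ℝ)⁻¹ * ∑ p ∈ Lambda L,
            4 * π ^ 2 * (y : ℝ) ^ 2 * (((p : ℝ) / L) ^ 2 * ‖dft L f p‖) := by
          gcongr with p hp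
          exact hterm p hp
      _ = 4 * π ^ 2 * (y : ℝ) ^ 2 *
            ((L : ℝ)⁻¹ * ∑ p ∈ Lambda L, ((p : ℝ) / L) ^ 2 * ‖dft L f p‖) := by
          rw [← Finset.mul_sum]
          ring
  · -- sup bound
    set M := (Lambda L).sup' (by unfold Lambda; exact Finset.nonempty_Ioc.mpr (by omega))
        (fun x' => ‖f x'‖) with hMdef
    have hM : ∀ z ∈ Lambda L, ‖f z‖ ≤ M := fun z hz =>
      Finset.le_sup' (fun x' => ‖f x'‖) hz
    have hM0 : 0 ≤ M := le_trans (norm_nonneg _) (hM x hx)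
    rcases eq_or_ne y 0 with rfl | hy0
    · simp only [taylorRem, add_zero, wrap_eq_self hL hx, Int.cast_zero, zero_mul, sub_zero,
        sub_self, norm_zero, abs_zero, mul_zero]
      positivity
    · have h1 : (1 : ℤ) ≤ |y| := Int.one_le_abs (by omega)
      have h1' : (1 : ℝ) ≤ |(y : ℝ)| := by
        rw [← Int.cast_abs]; exact_mod_cast h1
      unfold taylorRem dGrad
      have hw1 := hM _ (wrap_mem L hL (x + y))
      have hw2 := hM _ (wrap_mem L hL (x + 1))
      have hfx := hM x hx
      calc ‖f (wrap L (x + y)) - f x - (y : ℂ) * (f (wrap L (x + 1)) - f x)‖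
          ≤ ‖f (wrap L (x + y)) - f x‖
            + ‖(y : ℂ) * (f (wrap L (x + 1)) - f x)‖ :=
            norm_sub_le _ _
        _ ≤ (‖f (wrap L (x + y))‖ + ‖f x‖)
            + |(y : ℝ)| * (‖f (wrap L (x + 1))‖ + ‖f x‖) := by
            rw [norm_mul]
            gcongr
            · exact norm_sub_le _ _
            · simp [Complex.norm_intCast]
            · exact norm_sub_le _ _
        _ ≤ (M + M) + |(y : ℝ)| * (M + M) := by gcongr
        _ ≤ 4 * |(y : ℝ)| * M := by nlinarith
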